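/- Let n ≥ 2, let G be a simple graph on vertex set Fin n which is a tree, and let N be an n×n matrix over ℤ with entries in {0,1} such that N + Nᵀ equals the adjacency matrix of G and N² = 0 (a bipartite orientation of G). Set C = I − N and φ(X) = det(X•C + Cᵀ) ∈ ℤ[X]. Then φ.coeff(n−1) = 1 and φ.coeff(n−2) = 1 − Σ_{i} C(d_i − 1, 2), where d_i is the degree of vertex i in G. -/

import Mathlib

open Polynomial Matrix

variable {R : Type*} [CommRing R] {m : Type*} [Fintype m] [DecidableEq m]

lemma comp_negX_coeff_two (p : R[X]) : (p.comp (-X)).coeff 2 = p.coeff 2 := by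
  have hneg : ∀ b : ℕ, (-X : R[X])^b = C ((-1:R)^b) * X^b := by
    intro b; rw [neg_pow, ← C_1, ← C_neg, ← C_pow]
  rw [comp_eq_sum_left]
  rw [Polynomial.sum, finset_sum_coeff]
  rw [Finset.sum_eq_single 2]
  · rw [hneg, ← mul_assoc, ← C_mul, coeff_C_mul, coeff_X_pow]
    simp
  · intro b _ hb
    rw [hneg, ← mul_assoc, ← C_mul, coeff_C_mul, coeff_X_pow]
    simp [eq_comm, hb]
  · intro h
    simp [Polynomial.notMem_support_iff.mp h]

lemma comp_Xsq_coeff_two (p : R[X]) : (p.comp (X^2)).coeff 2 = p.coeff 1 := by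
  rw [comp_eq_sum_left, Polynomial.sum, finset_sum_coeff]
  rw [Finset.sum_eq_single 1]
  · simp
  · intro b _ hb
    rw [← pow_mul, coeff_C_mul, coeff_X_pow]
    have : ¬ (2 = 2 * b) := by omega
    simp [this]
  · intro h
    simp [Polynomial.notMem_support_iff.mp h]

variable {R : Type*} [CommRing R] {m : Type*} [Fintype m] [DecidableEq m]

lemma matrix_map_aeval (q : R[X]) (A : Matrix m m R) :
    ((1 : Matrix m m R[X]) - (X : R[X]) • A.map C).map (aeval q : R[X] →ₐ[R] R[X])
      = 1 - q • A.map C := by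
  ext i j : 1
  simp only [map_apply, Matrix.sub_apply, Matrix.smul_apply, smul_eq_mul, _root_.map_sub, _root_.map_mul,
    aeval_X, aeval_C, one_apply]
  split <;> simp [algebraMap_eq, mul_comm]

lemma det_map_aeval (q : R[X]) (A : Matrix m m R) :
    det ((1 : Matrix m m R[X]) - q • A.map C) = (charpolyRev A).comp q := by
  rw [comp_eq_aeval, charpolyRev, ← matrix_map_aeval q A]
  exact (AlgHom.map_det (aeval q : R[X] →ₐ[R] R[X]) _).symm

lemma charpolyRev_neg_eq_comp (M : Matrix m m R) :
    charpolyRev (-M) = (charpolyRev M).comp (-X) := by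
  rw [← det_map_aeval (-X) M, charpolyRev]
  congr 1
  ext i j : 1
  simp only [Matrix.sub_apply, Matrix.smul_apply, map_apply, Matrix.neg_apply, smul_eq_mul, C_neg]
  ring

lemma charpolyRev_mul_neg (M : Matrix m m R) :
    charpolyRev M * charpolyRev (-M) = (charpolyRev (M*M)).comp (X^2) := by
  rw [← det_map_aeval (X^2) (M*M), charpolyRev, charpolyRev, ← det_mul]
  congr 1
  have hneg : ((-M).map C : Matrix m m R[X]) = -(M.map C) := by
    ext i j; simp
  have hsq : ((X:R[X]) • M.map C) * ((X:R[X]) • M.map C)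
      = (X^2 : R[X]) • (M*M).map C := by
    rw [Matrix.smul_mul, Matrix.mul_smul, smul_smul, ← pow_two, Matrix.map_mul]
  rw [hneg, ← hsq, smul_neg, sub_neg_eq_add]
  rw [sub_mul, mul_add, mul_add, one_mul, one_mul, mul_one]
  abel

theorem two_mul_coeff_two_charpolyRev (M : Matrix m m R) :
    2 * (charpolyRev M).coeff 2 = (trace M)^2 - trace (M*M) := by
  have key := congrArg (fun p => p.coeff 2) (charpolyRev_mul_neg M)
  simp only [coeff_mul] at key
  rw [comp_Xsq_coeff_two, coeff_charpolyRev_eq_neg_trace,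
    Finset.Nat.sum_antidiagonal_eq_sum_range_succ_mk] at key
  rw [Finset.sum_range_succ, Finset.sum_range_succ, Finset.sum_range_one] at key
  have h0 : (charpolyRev M).coeff 0 = 1 := by
    rw [coeff_zero_eq_eval_zero, eval_charpolyRev]
  have h0' : (charpolyRev (-M)).coeff 0 = 1 := by
    rw [coeff_zero_eq_eval_zero, eval_charpolyRev]
  have h2' : (charpolyRev (-M)).coeff 2 = (charpolyRev M).coeff 2 := by
    rw [charpolyRev_neg_eq_comp, comp_negX_coeff_two]
  rw [h0, h0', h2', coeff_charpolyRev_eq_neg_trace, coeff_charpolyRev_eq_neg_trace,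
    trace_neg] at key
  linear_combination key

variable {n : ℕ}

lemma det_one_sub_of_sq_zero (N : Matrix (Fin n) (Fin n) ℤ) (hN2 : N * N = 0) :
    det (1 - N) = 1 := by
  have hnil : IsNilpotent N := ⟨2, by rw [pow_two]; exact hN2⟩
  have hu := Matrix.isUnit_charpolyRev_of_isNilpotent hnil
  obtain ⟨r, _, hCr⟩ := Polynomial.isUnit_iff.mp hu
  have hr1 : r = 1 := by
    have h := congrArg (eval 0) hCr
    rwa [eval_C, Matrix.eval_charpolyRev] at h
  have hrev : charpolyRev N = 1 := by rw [← hCr, hr1, C_1]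
  have h := congrArg (eval 1) hrev
  rw [charpolyRev] at h
  rw [show (Polynomial.eval 1 : ℤ[X] → ℤ) = ⇑(Polynomial.evalRingHom 1) from rfl,
    RingHom.map_det] at h
  have hmap : ((1 : Matrix (Fin n) (Fin n) ℤ[X]) - (X : ℤ[X]) • N.map C).map
      (Polynomial.evalRingHom 1) = 1 - N := by
    ext i j
    simp only [Matrix.map_apply, Matrix.sub_apply, Matrix.smul_apply, smul_eq_mul, one_apply]
    split <;> simp
  rw [show (Polynomial.evalRingHom 1).mapMatrix ((1 : Matrix (Fin n) (Fin n) ℤ[X])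
      - (X : ℤ[X]) • N.map C) = ((1 : Matrix (Fin n) (Fin n) ℤ[X])
      - (X : ℤ[X]) • N.map C).map (Polynomial.evalRingHom 1) from rfl, hmap] at h
  simp only [_root_.map_one] at h
  exact h

lemma map_neg_intC (D : Matrix (Fin n) (Fin n) ℤ) :
    ((-D).map (C : ℤ → ℤ[X])) = -(D.map C) := by
  ext i j; simp

lemma phi_factor (N : Matrix (Fin n) (Fin n) ℤ) (hN2 : N * N = 0) :
    ((X : ℤ[X]) • ((1 - N).map C) + ((1 - N)ᵀ).map C).det
      = Matrix.charpoly (-((1 + N) * (1 - Nᵀ))) := by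
  set D := (1 + N) * (1 - Nᵀ) with hD
  have h1 : (1 - N) * (1 + N) = 1 := by
    rw [mul_add, mul_one, sub_mul, one_mul, hN2, sub_zero, sub_add_cancel]
  have hfact : (1 - N) * D = 1 - Nᵀ := by
    rw [hD, ← mul_assoc, h1, one_mul]
  have hmat : ((X : ℤ[X]) • ((1 - N).map C) + ((1 - N)ᵀ).map C)
      = ((1 - N).map C) * charmatrix (-D) := by
    rw [charmatrix, show ((C : ℤ →+* ℤ[X]).mapMatrix (-D) : Matrix (Fin n) (Fin n) ℤ[X])
        = (-D).map C from rfl, map_neg_intC, sub_neg_eq_add, mul_add, scalar_apply,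
      ← smul_one_eq_diagonal, Matrix.mul_smul, mul_one, ← Matrix.map_mul, hfact,
      transpose_sub, transpose_one]
  rw [hmat, det_mul, show ((1 - N).map (C : ℤ → ℤ[X])).det
      = (C : ℤ →+* ℤ[X]) (1 - N).det from ((C : ℤ →+* ℤ[X]).map_det _).symm,
    det_one_sub_of_sq_zero N hN2, C_1, one_mul, Matrix.charpoly]

lemma charpoly_coeff_rev (M : Matrix (Fin n) (Fin n) ℤ) (k : ℕ) (hk : k ≤ n) :
    (Matrix.charpolyRev M).coeff k = (Matrix.charpoly M).coeff (n - k) := by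
  rw [← Matrix.reverse_charpoly, Polynomial.coeff_reverse,
    Matrix.charpoly_natDegree_eq_dim, Fintype.card_fin, Polynomial.revAt_le hk]

lemma tree_no_common {n : ℕ} {G : SimpleGraph (Fin n)} (hT : G.IsTree)
    {i j k l : Fin n} (hij : i ≠ j) (hkl : k ≠ l)
    (hik : G.Adj i k) (hjk : G.Adj j k) (hil : G.Adj i l) (hjl : G.Adj j l) : False := by
  have hpu := SimpleGraph.isAcyclic_iff_path_unique.mp hT.2
  let p : G.Walk i j := SimpleGraph.Walk.cons hik (SimpleGraph.Walk.cons hjk.symm SimpleGraph.Walk.nil)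
  let q : G.Walk i j := SimpleGraph.Walk.cons hil (SimpleGraph.Walk.cons hjl.symm SimpleGraph.Walk.nil)
  have hp : p.IsPath := by
    rw [SimpleGraph.Walk.isPath_def]
    simp [p, hik.ne, hij, hjk.ne']
  have hq : q.IsPath := by
    rw [SimpleGraph.Walk.isPath_def]
    simp [q, hil.ne, hij, hjl.ne']
  have := hpu ⟨p, hp⟩ ⟨q, hq⟩
  have hsupp : p.support = q.support := by rw [show p = q from congrArg Subtype.val this]
  simp only [SimpleGraph.Walk.support_cons, SimpleGraph.Walk.support_nil, p, q] at hsupp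
  rw [List.cons_eq_cons, List.cons_eq_cons] at hsupp
  exact hkl hsupp.2.1

variable {n : ℕ}

section counts
variable (G : SimpleGraph (Fin n)) [DecidableRel G.Adj] (N : Matrix (Fin n) (Fin n) ℤ)

lemma adj_row_sum (i : Fin n) : ∑ j, (G.adjMatrix ℤ) i j = (G.degree i : ℤ) := by
  simp [SimpleGraph.adjMatrix_apply, SimpleGraph.degree, SimpleGraph.neighborFinset_eq_filter,
    Finset.sum_boole]

variable {G N}

lemma term_zero (h01 : ∀ i j, N i j = 0 ∨ N i j = 1) (hN2 : N * N = 0)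
    (a b c : Fin n) : N a b * N b c = 0 := by
  have hsum : ∑ m, N a m * N m c = 0 := by
    have := congrFun (congrFun hN2 a) c
    simpa [Matrix.mul_apply] using this
  have hnn : ∀ m ∈ Finset.univ, (0:ℤ) ≤ N a m * N m c := by
    intro m _
    rcases h01 a m with h | h <;> rcases h01 m c with h' | h' <;> simp [h, h']
  exact (Finset.sum_eq_zero_iff_of_nonneg hnn).mp hsum b (Finset.mem_univ b)
end counts

section counts2
variable {G : SimpleGraph (Fin n)} [DecidableRel G.Adj] {N : Matrix (Fin n) (Fin n) ℤ}

lemma adj_of_one (h01 : ∀ i j, N i j = 0 ∨ N i j = 1) (hNA : N + Nᵀ = G.adjMatrix ℤ)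
    {i j : Fin n} (h : N i j = 1) : G.Adj i j := by
  have hA := congrFun (congrFun hNA i) j
  simp only [Matrix.add_apply, Matrix.transpose_apply, SimpleGraph.adjMatrix_apply] at hA
  by_contra hadj
  rw [if_neg hadj, h] at hA
  rcases h01 j i with h' | h' <;> rw [h'] at hA <;> omega

lemma Ndiag (h01 : ∀ i j, N i j = 0 ∨ N i j = 1) (hNA : N + Nᵀ = G.adjMatrix ℤ)
    (i : Fin n) : N i i = 0 := by
  have hA := congrFun (congrFun hNA i) i
  simp only [Matrix.add_apply, Matrix.transpose_apply, SimpleGraph.adjMatrix_apply,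
    SimpleGraph.irrefl, if_false] at hA
  omega

lemma P_off_diag (hT : G.IsTree) (h01 : ∀ i j, N i j = 0 ∨ N i j = 1)
    (hNA : N + Nᵀ = G.adjMatrix ℤ) {i j : Fin n} (hij : i ≠ j) :
    (N * Nᵀ) i j = 0 ∨ (N * Nᵀ) i j = 1 := by
  have hP : (N * Nᵀ) i j = ∑ k, N i k * N j k := by
    simp [Matrix.mul_apply, Matrix.transpose_apply]
  set s := Finset.univ.filter (fun k => N i k * N j k = 1) with hs
  have hterm : ∀ k, N i k * N j k = 1 → N i k = 1 ∧ N j k = 1 := by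
    intro k h
    rcases h01 i k with h' | h' <;> rcases h01 j k with h'' | h'' <;>
      simp [h', h''] at h ⊢
  have hcard : s.card ≤ 1 := by
    rw [Finset.card_le_one]
    intro a ha b hb
    simp only [hs, Finset.mem_filter] at ha hb
    by_contra hab
    obtain ⟨ha1, ha2⟩ := hterm a ha.2
    obtain ⟨hb1, hb2⟩ := hterm b hb.2
    exact tree_no_common hT hij hab (adj_of_one h01 hNA ha1) (adj_of_one h01 hNA ha2)
      (adj_of_one h01 hNA hb1) (adj_of_one h01 hNA hb2)
  have hfirst : ∑ k ∈ s, N i k * N j k = (s.card : ℤ) := by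
    rw [Finset.sum_congr rfl (fun k hk => ((Finset.mem_filter.mp hk).2 : N i k * N j k = 1))]
    simp
    rfl
  have hsecond : ∑ k ∈ Finset.univ.filter (fun k => ¬ N i k * N j k = 1), N i k * N j k = 0 := by
    apply Finset.sum_eq_zero
    intro k hk
    simp only [Finset.mem_filter, Finset.mem_univ, true_and] at hk
    rcases h01 i k with h' | h' <;> rcases h01 j k with h'' | h'' <;>
      simp [h', h''] at hk ⊢
  have hPs : (N * Nᵀ) i j = (s.card : ℤ) := by
    rw [hP, ← Finset.sum_filter_add_sum_filter_not Finset.univ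
      (fun k => N i k * N j k = 1), hsecond, add_zero]
    exact hfirst
  rcases Nat.le_one_iff_eq_zero_or_eq_one.mp hcard with h | h
  · left; rw [hPs, h]; norm_num
  · right; rw [hPs, h]; norm_num
end counts2

section counts3
variable {G : SimpleGraph (Fin n)} [DecidableRel G.Adj] {N : Matrix (Fin n) (Fin n) ℤ}

lemma sum_deg_int (hn : 2 ≤ n) (hT : G.IsTree) :
    ∑ i, (G.degree i : ℤ) = 2*((n:ℤ)-1) := by
  have h1 : ∑ i, G.degree i = 2 * G.edgeFinset.card := G.sum_degrees_eq_twice_card_edges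
  have h2 : G.edgeFinset.card = n - 1 := by
    have := hT.card_edgeFinset
    rw [Fintype.card_fin] at this
    omega
  rw [h2] at h1
  have := congrArg (fun m : ℕ => (m : ℤ)) h1
  push_cast at this
  rw [this]
  have h3 : ((n - 1 : ℕ) : ℤ) = (n : ℤ) - 1 := by omega
  rw [h3]

lemma row_sum_add (hNA : N + Nᵀ = G.adjMatrix ℤ) (i : Fin n) :
    (∑ j, N i j) + (∑ j, N j i) = (G.degree i : ℤ) := by
  rw [← adj_row_sum G i, ← Finset.sum_add_distrib]
  apply Finset.sum_congr rfl
  intro j _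
  have := congrFun (congrFun hNA i) j
  simpa [Matrix.add_apply, Matrix.transpose_apply] using this

lemma sumN_eq (hn : 2 ≤ n) (hT : G.IsTree) (hNA : N + Nᵀ = G.adjMatrix ℤ) :
    ∑ i, ∑ j, N i j = (n:ℤ) - 1 := by
  have key : (∑ i, ∑ j, N i j) + (∑ i, ∑ j, N i j) = 2*((n:ℤ)-1) := by
    rw [← sum_deg_int hn hT]
    conv_lhs => arg 2; rw [Finset.sum_comm (f := fun i j => N i j)]
    rw [← Finset.sum_add_distrib]
    exact Finset.sum_congr rfl fun i _ => row_sum_add hNA i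
  linarith

lemma trace_NNT (h01 : ∀ i j, N i j = 0 ∨ N i j = 1) :
    trace (N * Nᵀ) = ∑ i, ∑ j, N i j := by
  rw [Matrix.trace]
  apply Finset.sum_congr rfl
  intro i _
  rw [Matrix.diag_apply, Matrix.mul_apply]
  apply Finset.sum_congr rfl
  intro j _
  rw [Matrix.transpose_apply]
  rcases h01 i j with h | h <;> simp [h]

lemma trace_P2 (hn : 2 ≤ n) (hT : G.IsTree) (h01 : ∀ i j, N i j = 0 ∨ N i j = 1)
    (hNA : N + Nᵀ = G.adjMatrix ℤ) (hN2 : N * N = 0) :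
    trace ((N * Nᵀ) * (N * Nᵀ)) = (∑ i, (G.degree i:ℤ)^2) - ((n:ℤ) - 1) := by
  set P := N * Nᵀ with hPdef
  have hPsymm : ∀ i j, P j i = P i j := by
    intro i j
    simp only [hPdef, Matrix.mul_apply, Matrix.transpose_apply]
    exact Finset.sum_congr rfl fun k _ => mul_comm _ _
  have htr : trace (P * P) = ∑ i, ∑ j, (P i j)^2 := by
    rw [Matrix.trace]
    apply Finset.sum_congr rfl; intro i _
    rw [Matrix.diag_apply, Matrix.mul_apply]
    exact Finset.sum_congr rfl fun j _ => by rw [hPsymm i j, pow_two]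
  have hdiag : ∀ i, P i i = ∑ j, N i j := by
    intro i
    simp only [hPdef, Matrix.mul_apply, Matrix.transpose_apply]
    exact Finset.sum_congr rfl fun j _ => by rcases h01 i j with h|h <;> simp [h]
  have hsq_sub : ∑ i, ∑ j, ((P i j)^2 - P i j)
      = ∑ i, ((∑ j, N i j)^2 - ∑ j, N i j) := by
    apply Finset.sum_congr rfl; intro i _
    rw [Finset.sum_eq_single i]
    · rw [hdiag]
    · intro j _ hji
      rcases P_off_diag hT h01 hNA (Ne.symm hji) with h|h <;>
        rw [show P i j = (N * Nᵀ) i j from rfl, h] <;> ring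
    · intro h; exact absurd (Finset.mem_univ i) h
  have hsumP : ∑ i, ∑ j, P i j = ∑ k, (∑ j, N j k)^2 := by
    have hrow : ∀ i, ∑ j, P i j = ∑ k, N i k * (∑ j, N j k) := by
      intro i
      have : ∀ j, P i j = ∑ k, N i k * N j k := by
        intro j; simp [hPdef, Matrix.mul_apply, Matrix.transpose_apply]
      rw [Finset.sum_congr rfl fun j _ => this j, Finset.sum_comm]
      exact Finset.sum_congr rfl fun k _ => (Finset.mul_sum _ _ _).symm
    calc ∑ i, ∑ j, P i j = ∑ i, ∑ k, N i k * (∑ j, N j k) :=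
          Finset.sum_congr rfl fun i _ => hrow i
      _ = ∑ k, ∑ i, N i k * (∑ j, N j k) := Finset.sum_comm
      _ = ∑ k, (∑ i, N i k) * (∑ j, N j k) :=
          Finset.sum_congr rfl fun k _ => (Finset.sum_mul _ _ _).symm
      _ = ∑ k, (∑ j, N j k)^2 := Finset.sum_congr rfl fun k _ => by rw [pow_two]
  have hrc0 : ∀ i, (∑ j, N i j) * (∑ j, N j i) = 0 := by
    intro i
    rw [Finset.sum_mul_sum]
    apply Finset.sum_eq_zero; intro k _
    apply Finset.sum_eq_zero; intro j _
    rw [mul_comm]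
    exact term_zero h01 hN2 j i k
  have hd2 : ∀ i, (∑ j, N i j)^2 + (∑ j, N j i)^2 = (G.degree i:ℤ)^2 := by
    intro i
    have h1 := row_sum_add (G := G) hNA i
    have h2 := hrc0 i
    nlinarith [h1, h2]
  have hsum_r : ∑ i, ∑ j, N i j = (n:ℤ)-1 := sumN_eq hn hT hNA
  have hsplit : trace (P*P)
      = (∑ i, ∑ j, P i j) + ∑ i, ((∑ j, N i j)^2 - (∑ j, N i j)) := by
    rw [htr, ← hsq_sub, ← Finset.sum_add_distrib]
    apply Finset.sum_congr rfl; intro i _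
    rw [← Finset.sum_add_distrib]
    exact Finset.sum_congr rfl fun j _ => by ring
  rw [hsplit, hsumP]
  have h5 : ∑ i, ((∑ j, N i j)^2 - (∑ j, N i j))
      = (∑ i, (∑ j, N i j)^2) - ((n:ℤ)-1) := by
    rw [Finset.sum_sub_distrib, hsum_r]
  rw [h5]
  have h6 : (∑ k, (∑ j, N j k)^2) + ∑ i, (∑ j, N i j)^2 = ∑ i, (G.degree i:ℤ)^2 := by
    rw [← Finset.sum_add_distrib]
    exact Finset.sum_congr rfl fun i _ => by rw [add_comm]; exact hd2 i
  linarith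

lemma trace_D (hn : 2 ≤ n) (hT : G.IsTree) (h01 : ∀ i j, N i j = 0 ∨ N i j = 1)
    (hNA : N + Nᵀ = G.adjMatrix ℤ) (hN2 : N * N = 0) :
    trace ((1 + N) * (1 - Nᵀ)) = 1 := by
  have htrN : trace N = 0 := by
    rw [Matrix.trace]
    exact Finset.sum_eq_zero fun i _ => Ndiag h01 hNA i
  have hE : trace (N * Nᵀ) = (n:ℤ) - 1 := by
    rw [trace_NNT h01, sumN_eq hn hT hNA]
  have hDexp : (1 + N) * (1 - Nᵀ) = 1 + N - Nᵀ - N * Nᵀ := by noncomm_ring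
  rw [hDexp, Matrix.trace_sub, Matrix.trace_sub, Matrix.trace_add, Matrix.trace_one,
    htrN, Matrix.trace_transpose, htrN, hE, Fintype.card_fin]
  ring

lemma trace_DD (hn : 2 ≤ n) (hT : G.IsTree) (h01 : ∀ i j, N i j = 0 ∨ N i j = 1)
    (hNA : N + Nᵀ = G.adjMatrix ℤ) (hN2 : N * N = 0) :
    trace (((1 + N) * (1 - Nᵀ)) * ((1 + N) * (1 - Nᵀ)))
      = (n:ℤ) - 4*((n:ℤ)-1) + ((∑ i, (G.degree i:ℤ)^2) - ((n:ℤ)-1)) := by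
  have htrN : trace N = 0 := by
    rw [Matrix.trace]
    exact Finset.sum_eq_zero fun i _ => Ndiag h01 hNA i
  have hE : trace (N * Nᵀ) = (n:ℤ) - 1 := by
    rw [trace_NNT h01, sumN_eq hn hT hNA]
  have hNT2 : Nᵀ * Nᵀ = 0 := by
    rw [← Matrix.transpose_mul, hN2, Matrix.transpose_zero]
  have hNP : N * (N * Nᵀ) = 0 := by rw [← mul_assoc, hN2, zero_mul]
  have hPNT : (N * Nᵀ) * Nᵀ = 0 := by rw [mul_assoc, hNT2, mul_zero]
  have hDD : ((1 + N) * (1 - Nᵀ)) * ((1 + N) * (1 - Nᵀ))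
      = (1 + N - Nᵀ - N * Nᵀ) + (N + N*N - N*Nᵀ - N*(N*Nᵀ))
        - (Nᵀ + Nᵀ*N - Nᵀ*Nᵀ - Nᵀ*(N*Nᵀ)) - ((N*Nᵀ) + (N*Nᵀ)*N - (N*Nᵀ)*Nᵀ
        - (N*Nᵀ)*(N*Nᵀ)) := by noncomm_ring
  have htrNTP : trace (Nᵀ*(N*Nᵀ)) = 0 := by
    rw [Matrix.trace_mul_comm, mul_assoc, hNT2, mul_zero, Matrix.trace_zero]
  have htrPN : trace ((N*Nᵀ)*N) = 0 := by
    rw [Matrix.trace_mul_comm, hNP, Matrix.trace_zero]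
  have htrNTN : trace (Nᵀ*N) = (n:ℤ) - 1 := by
    rw [Matrix.trace_mul_comm, hE]
  have hP2 := trace_P2 hn hT h01 hNA hN2
  rw [hDD]
  simp only [Matrix.trace_sub, Matrix.trace_add, Matrix.trace_one, htrN,
    Matrix.trace_transpose, hE, hN2, hNP, hPNT, hNT2, Matrix.trace_zero, htrNTP, htrPN,
    htrNTN, hP2, Fintype.card_fin]
  ring

end counts3

lemma two_mul_choose_two (m : ℕ) : 2 * m.choose 2 = m * (m - 1) := by
  induction m with
  | zero => rfl
  | succ k ih =>
    rw [Nat.choose_succ_succ, Nat.mul_add, ih, Nat.choose_one_right]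
    cases k with
    | zero => rfl
    | succ j =>
      simp only [Nat.succ_sub_one]
      ring

lemma choose_cast_deg (d : ℕ) (hd : 1 ≤ d) :
    2 * ((d-1).choose 2 : ℤ) = ((d:ℤ)-1) * ((d:ℤ)-2) := by
  have h := congrArg (fun m : ℕ => (m:ℤ)) (two_mul_choose_two (d-1))
  push_cast at h
  rcases Nat.lt_or_ge d 2 with h2 | h2
  · interval_cases d
    norm_num
  · have e1 : ((d-1 : ℕ) : ℤ) = (d:ℤ) - 1 := by omega
    have e2 : ((d-1-1 : ℕ) : ℤ) = (d:ℤ) - 2 := by omega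
    rw [e1, e2] at h
    linarith

lemma deg_pos {n : ℕ} {G : SimpleGraph (Fin n)} [DecidableRel G.Adj] (hn : 2 ≤ n)
    (hT : G.IsTree) (i : Fin n) : 1 ≤ G.degree i := by
  haveI : Nontrivial (Fin n) := Fin.nontrivial_iff_two_le.mpr hn
  obtain ⟨u, hu⟩ := exists_ne i
  obtain ⟨w⟩ := hT.1.preconnected i u
  rcases w with _ | ⟨h, p⟩
  · exact absurd rfl hu.symm
  · exact (G.degree_pos_iff_exists_adj i).mpr ⟨_, h⟩

/-- Corollary 1.3 (Happel): the first two coefficients of the Coxeter polynomial of a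
tree `T` on `n ≥ 2` vertices are `a₁ = 1` and `a₂ = 1 - ∑ᵢ C(dᵢ - 1, 2)`, computed via
a bipartite orientation `N` of the tree. -/
theorem coxeter_coeffs_tree (n : ℕ) (hn : 2 ≤ n) (G : SimpleGraph (Fin n))
    [DecidableRel G.Adj] (hT : G.IsTree) (N : Matrix (Fin n) (Fin n) ℤ)
    (h01 : ∀ i j, N i j = 0 ∨ N i j = 1)
    (hNA : N + Nᵀ = G.adjMatrix ℤ) (hN2 : N * N = 0) :
    let C : Matrix (Fin n) (Fin n) ℤ := 1 - N
    let φ : ℤ[X] := ((X : ℤ[X]) • C.map Polynomial.C + Cᵀ.map Polynomial.C).det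
    φ.coeff (n - 1) = 1 ∧
      φ.coeff (n - 2) = 1 - ∑ i, ((G.degree i - 1).choose 2 : ℤ) := by
  intro C φ
  have hφeq : φ = Matrix.charpoly (-((1 + N) * (1 - Nᵀ))) := phi_factor N hN2
  have h1le : 1 ≤ n := by omega
  have htrD := trace_D hn hT h01 hNA hN2
  have htrDD := trace_DD hn hT h01 hNA hN2
  have hrev1 := charpoly_coeff_rev (-((1 + N) * (1 - Nᵀ))) 1 h1le
  have hrev2 := charpoly_coeff_rev (-((1 + N) * (1 - Nᵀ))) 2 hn
  constructor
  · rw [hφeq, ← hrev1, Matrix.coeff_charpolyRev_eq_neg_trace, Matrix.trace_neg, neg_neg, htrD]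
  · have h2 := two_mul_coeff_two_charpolyRev (-((1 + N) * (1 - Nᵀ)))
    rw [Matrix.trace_neg, htrD, neg_mul_neg, htrDD, hrev2] at h2
    rw [hφeq]
    have hsum : ∑ i, 2 * ((G.degree i - 1).choose 2 : ℤ)
        = ∑ i, (((G.degree i:ℤ))-1)*(((G.degree i:ℤ))-2) :=
      Finset.sum_congr rfl fun i _ => choose_cast_deg _ (deg_pos hn hT i)
    have hdeg := sum_deg_int hn hT
    have hexp : ∑ i, (((G.degree i:ℤ))-1)*(((G.degree i:ℤ))-2)
        = (∑ i, (G.degree i:ℤ)^2) - 3*(∑ i, (G.degree i:ℤ)) + 2*n := by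
      have h' : ∀ i : Fin n, ((G.degree i:ℤ)-1)*((G.degree i:ℤ)-2)
          = ((G.degree i:ℤ)^2 - 3*(G.degree i:ℤ)) + 2 := fun i => by ring
      rw [Finset.sum_congr rfl fun i _ => h' i, Finset.sum_add_distrib,
        Finset.sum_sub_distrib, ← Finset.mul_sum, Finset.sum_const, Finset.card_univ,
        Fintype.card_fin, nsmul_eq_mul]
      ring
    have hs2 : ∑ i, 2 * ((G.degree i - 1).choose 2 : ℤ)
        = 2 * ∑ i, ((G.degree i - 1).choose 2 : ℤ) := by rw [Finset.mul_sum]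
    have hgoal : 2 * (Matrix.charpoly (-((1 + N) * (1 - Nᵀ)))).coeff (n-2)
        = 2 * (1 - ∑ i, ((G.degree i - 1).choose 2 : ℤ)) := by
      rw [h2]
      have hsq : ((-1 : ℤ))^2 = 1 := by norm_num
      linarith [hsum, hexp, hdeg, hs2, hsq]
    exact mul_left_cancel₀ two_ne_zero hgoal
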